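/- Let α = 1, let Σ_ν and Σ_ω be symmetric positive definite, let C_0 be symmetric positive definite, and consider the recursion C_{n+1}⁻¹ = GᵀΣ_ν⁻¹G + (C_n + Σ_ω)⁻¹, C_{n+1}⁻¹ m_{n+1} = GᵀΣ_ν⁻¹y + (C_n + Σ_ω)⁻¹ m_n. Then the mean sequence {m_n} converges exponentially fast to a point m_∞ ∈ ℝ^{N_θ} satisfying GᵀΣ_ν⁻¹(y − G m_∞) = 0, i.e. m_∞ is a stationary point of θ ↦ ½‖Σ_ν^{-1/2}(y − Gθ)‖²: there exist K > 0 and r ∈ (0,1) such that ‖m_n − m_∞‖ ≤ K rⁿ for all n. -/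

import Mathlib

open Matrix Topology Filter

section KalHelpers
variable {d : ℕ}

instance kalToLpCoe : Coe (Fin d → ℝ) (EuclideanSpace ℝ (Fin d)) := ⟨WithLp.toLp 2⟩

section KalSqrt
open scoped MatrixOrder

noncomputable def Matrix.PosSemidef.kalSqrt {P : Matrix (Fin d) (Fin d) ℝ} (_hP : P.PosSemidef) :
    Matrix (Fin d) (Fin d) ℝ := CFC.sqrt P

lemma Matrix.PosSemidef.kalSqrt_mul_self {P : Matrix (Fin d) (Fin d) ℝ} (hP : P.PosSemidef) :
    hP.kalSqrt * hP.kalSqrt = P := CFC.sqrt_mul_sqrt_self P hP.nonneg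

lemma Matrix.PosSemidef.posSemidef_kalSqrt {P : Matrix (Fin d) (Fin d) ℝ} (hP : P.PosSemidef) :
    hP.kalSqrt.PosSemidef := (CFC.sqrt_nonneg P).posSemidef

end KalSqrt

lemma kal_inner_eq_dot (x y : EuclideanSpace ℝ (Fin d)) :
    (inner ℝ x y : ℝ) = (x : Fin d → ℝ) ⬝ᵥ (y : Fin d → ℝ) := by
  simp [PiLp.inner_apply, RCLike.inner_apply, dotProduct, mul_comm]

lemma kal_norm_sq (x : EuclideanSpace ℝ (Fin d)) : ‖x‖^2 = (x : Fin d → ℝ) ⬝ᵥ x := by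
  rw [← kal_inner_eq_dot]; exact (real_inner_self_eq_norm_sq x).symm

lemma kal_dot_mulVec_symm {B : Matrix (Fin d) (Fin d) ℝ} (hB : Bᵀ = B) (x w : Fin d → ℝ) :
    x ⬝ᵥ (B *ᵥ w) = (B *ᵥ x) ⬝ᵥ w := by
  rw [Matrix.dotProduct_mulVec, ← Matrix.mulVec_transpose, hB]

lemma kal_quad_single₂ (M : Matrix (Fin d) (Fin d) ℝ) (i j : Fin d) (a b : ℝ) :
    Pi.single i a ⬝ᵥ (M *ᵥ Pi.single j b) = a * (M i j * b) := by
  simp [Matrix.mulVec_single, single_dotProduct]; ring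

lemma kal_psd_nonneg {P : Matrix (Fin d) (Fin d) ℝ} (hP : P.PosSemidef) (v : Fin d → ℝ) :
    0 ≤ v ⬝ᵥ (P *ᵥ v) := by simpa using hP.dotProduct_mulVec_nonneg v

lemma kal_pd_pos {P : Matrix (Fin d) (Fin d) ℝ} (hP : P.PosDef) {v : Fin d → ℝ} (hv : v ≠ 0) :
    0 < v ⬝ᵥ (P *ᵥ v) := by simpa using hP.dotProduct_mulVec_pos hv

lemma kal_psd_symm {P : Matrix (Fin d) (Fin d) ℝ} (hP : P.PosSemidef) : Pᵀ = P := by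
  have := hP.1
  rwa [Matrix.IsHermitian, Matrix.conjTranspose_eq_transpose_of_trivial] at this

lemma kal_trace_mono {P Q : Matrix (Fin d) (Fin d) ℝ}
    (h : ∀ v, v ⬝ᵥ (P *ᵥ v) ≤ v ⬝ᵥ (Q *ᵥ v)) : P.trace ≤ Q.trace := by
  classical
  simp only [Matrix.trace, Matrix.diag]
  apply Finset.sum_le_sum
  intro i _
  have := h (Pi.single i 1)
  rwa [kal_quad_single₂, kal_quad_single₂, one_mul, mul_one, one_mul, mul_one] at this

lemma kal_trace_nonneg {P : Matrix (Fin d) (Fin d) ℝ} (hP : P.PosSemidef) : 0 ≤ P.trace := by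
  classical
  simp only [Matrix.trace, Matrix.diag]
  apply Finset.sum_nonneg
  intro i _
  have := kal_psd_nonneg hP (Pi.single i 1)
  rwa [kal_quad_single₂, one_mul, mul_one] at this

lemma kal_psd_entry_le {P : Matrix (Fin d) (Fin d) ℝ} (hP : P.PosSemidef) (i j : Fin d) :
    |P i j| ≤ P.trace := by
  classical
  have hdiag : ∀ k, 0 ≤ P k k := by
    intro k
    have := kal_psd_nonneg hP (Pi.single k 1)
    rwa [kal_quad_single₂, one_mul, mul_one] at this
  have hdle : ∀ k, P k k ≤ P.trace := by
    intro k
    simp only [Matrix.trace, Matrix.diag]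
    exact Finset.single_le_sum (f := fun k => P k k) (fun k _ => hdiag k) (Finset.mem_univ k)
  rcases eq_or_ne i j with rfl | hij
  · rw [abs_of_nonneg (hdiag i)]; exact hdle i
  · have hsymm : P j i = P i j := by
      have h2 := congrFun (congrFun (kal_psd_symm hP) i) j
      rwa [Matrix.transpose_apply] at h2
    have hquad : ∀ c : ℝ, 0 ≤ P i i + c * (P i j + P j i) + c^2 * P j j := by
      intro c
      have := kal_psd_nonneg hP (Pi.single i 1 + Pi.single j c)
      rw [Matrix.mulVec_add, dotProduct_add, add_dotProduct,
        add_dotProduct, kal_quad_single₂, kal_quad_single₂, kal_quad_single₂,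
        kal_quad_single₂] at this
      nlinarith [this]
    have h1 := hquad 1
    have h2 := hquad (-1)
    rw [hsymm] at h1 h2
    have habs : |P i j| ≤ (P i i + P j j) / 2 := by
      rw [abs_le]; constructor <;> nlinarith
    nlinarith [hdle i, hdle j, hdiag i, hdiag j, abs_nonneg (P i j)]

lemma kal_psd_entry_le' {P : Matrix (Fin d) (Fin d) ℝ} (hP : P.PosSemidef) (i j : Fin d) :
    |P i j| ≤ P.trace := kal_psd_entry_le hP i j

lemma kal_mulVec_norm_le (M : Matrix (Fin d) (Fin d) ℝ) {t : ℝ} (ht : 0 ≤ t)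
    (hM : ∀ i j, |M i j| ≤ t) (v : EuclideanSpace ℝ (Fin d)) :
    ‖(show EuclideanSpace ℝ (Fin d) from M *ᵥ v)‖ ≤ d * t * ‖v‖ := by
  have hv2 : (0:ℝ) ≤ ‖v‖ := norm_nonneg _
  have key : ‖(show EuclideanSpace ℝ (Fin d) from M *ᵥ v)‖^2 ≤ (d * t * ‖v‖)^2 := by
    rw [kal_norm_sq]
    have hvsq : ‖v‖^2 = ∑ j, (v j)^2 := by
      rw [kal_norm_sq]; simp [dotProduct, sq]
    have h1 : (M *ᵥ v) ⬝ᵥ (M *ᵥ v) = ∑ i, (∑ j, M i j * v j)^2 := by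
      simp [dotProduct, Matrix.mulVec, sq]
    rw [h1]
    have h2 : ∀ i : Fin d, (∑ j, M i j * v j)^2 ≤ (d * t^2) * ‖v‖^2 := by
      intro i
      calc (∑ j, M i j * v j)^2 ≤ (∑ j, (M i j)^2) * ∑ j, (v j)^2 :=
            Finset.sum_mul_sq_le_sq_mul_sq _ _ _
        _ ≤ (∑ _j : Fin d, t^2) * ∑ j, (v j)^2 := by
            apply mul_le_mul_of_nonneg_right
            · apply Finset.sum_le_sum
              intro j _
              calc (M i j)^2 = |M i j|^2 := (sq_abs _).symm
                _ ≤ t^2 := by nlinarith [hM i j, abs_nonneg (M i j)]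
            · apply Finset.sum_nonneg; intro j _; positivity
        _ = (d * t^2) * ‖v‖^2 := by rw [hvsq]; simp [mul_comm]
    calc ∑ i, (∑ j, M i j * v j)^2 ≤ ∑ _i : Fin d, (d * t^2) * ‖v‖^2 :=
          Finset.sum_le_sum (fun i _ => h2 i)
      _ = d * ((d * t^2) * ‖v‖^2) := by simp
      _ = (d * t * ‖v‖)^2 := by ring
  have h0 : (0:ℝ) ≤ d * t * ‖v‖ := by positivity
  nlinarith [norm_nonneg (show EuclideanSpace ℝ (Fin d) from M *ᵥ v)]

lemma kal_posdef_lb (hd : 0 < d) {M : Matrix (Fin d) (Fin d) ℝ} (hM : M.PosDef) :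
    ∃ s > (0:ℝ), ∀ v : EuclideanSpace ℝ (Fin d), s * ‖v‖^2 ≤ (v : Fin d → ℝ) ⬝ᵥ (M *ᵥ v) := by
  classical
  set E := EuclideanSpace ℝ (Fin d)
  let T : E →ₗ[ℝ] E := Matrix.toEuclideanLin M
  let f : E → ℝ := fun v => inner ℝ v (T v)
  have hf : Continuous f := by
    have hT : Continuous T := T.continuous_of_finiteDimensional
    exact continuous_id.inner hT
  have hsph : IsCompact (Metric.sphere (0:E) 1) := isCompact_sphere _ _
  have hne : (Metric.sphere (0:E) 1).Nonempty := by
    refine ⟨EuclideanSpace.single ⟨0, hd⟩ 1, ?_⟩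
    rw [mem_sphere_zero_iff_norm, EuclideanSpace.norm_single]
    exact norm_one
  obtain ⟨x₀, hx₀mem, hx₀min⟩ := hsph.exists_isMinOn hne (hf.continuousOn)
  have hx₀norm : ‖x₀‖ = 1 := by simpa using hx₀mem
  have hx₀ne : x₀ ≠ 0 := by
    intro h; rw [h] at hx₀norm; simp at hx₀norm
  refine ⟨f x₀, ?_, ?_⟩
  · have : f x₀ = (x₀ : Fin d → ℝ) ⬝ᵥ (M *ᵥ x₀) := by
      simp only [f, T]; rw [kal_inner_eq_dot]; rfl
    rw [this]
    exact kal_pd_pos hM (by simpa using hx₀ne)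
  · intro v
    rcases eq_or_ne v 0 with rfl | hv
    · simp [Matrix.mulVec_zero]
    · have hvn : (0:ℝ) < ‖v‖ := norm_pos_iff.mpr hv
      set u : E := ‖v‖⁻¹ • v with hu
      have hun : u ∈ Metric.sphere (0:E) 1 := by
        simp [hu, norm_smul, abs_of_nonneg (inv_nonneg.mpr hvn.le), inv_mul_cancel₀ hvn.ne']
      have hfu : f x₀ ≤ f u := hx₀min hun
      have hexp : f u = ‖v‖⁻¹ * (‖v‖⁻¹ * ((v : Fin d → ℝ) ⬝ᵥ (M *ᵥ v))) := by
        simp only [f, T, hu]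
        rw [kal_inner_eq_dot]
        show (‖v‖⁻¹ • (v : Fin d → ℝ)) ⬝ᵥ (M *ᵥ (‖v‖⁻¹ • (v : Fin d → ℝ))) = _
        rw [Matrix.mulVec_smul, smul_dotProduct, dotProduct_smul]
        simp [smul_eq_mul]
      have : f x₀ * ‖v‖^2 ≤ (v : Fin d → ℝ) ⬝ᵥ (M *ᵥ v) := by
        rw [hexp] at hfu
        have h2 : f x₀ * ‖v‖^2 ≤ (‖v‖⁻¹ * (‖v‖⁻¹ * ((v : Fin d → ℝ) ⬝ᵥ (M *ᵥ v)))) * ‖v‖^2 := by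
          nlinarith [sq_nonneg ‖v‖]
        calc f x₀ * ‖v‖^2 ≤ _ := h2
          _ = (v : Fin d → ℝ) ⬝ᵥ (M *ᵥ v) := by
              rw [sq]
              field_simp
      linarith [this]

lemma kal_range_lb {B : Matrix (Fin d) (Fin d) ℝ} (hB : Bᵀ = B) :
    ∃ c > (0:ℝ), ∀ v : Fin d → ℝ,
      c * ‖(show EuclideanSpace ℝ (Fin d) from B *ᵥ v)‖
        ≤ ‖(show EuclideanSpace ℝ (Fin d) from B *ᵥ (B *ᵥ v))‖ := by
  classical
  set E := EuclideanSpace ℝ (Fin d)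
  let T : E →ₗ[ℝ] E := Matrix.toEuclideanLin B
  set K : Submodule ℝ E := LinearMap.range T with hK
  have hmapsTo : ∀ x ∈ K, T x ∈ K := fun x _ => LinearMap.mem_range_self T x
  let T' : K →ₗ[ℝ] K := T.restrict hmapsTo
  have hinj : Function.Injective T' := by
    rw [← LinearMap.ker_eq_bot]
    rw [Submodule.eq_bot_iff]
    rintro ⟨x, hx⟩ hker
    obtain ⟨w, rfl⟩ := hx
    have hTx : T (T w) = 0 := by
      have := congrArg (Subtype.val) hker
      exact this
    have hsa : (inner ℝ (T w) (T w) : ℝ) = inner ℝ w (T (T w)) := by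
      rw [kal_inner_eq_dot, kal_inner_eq_dot]
      show (B *ᵥ w) ⬝ᵥ (B *ᵥ w) = w ⬝ᵥ (B *ᵥ (B *ᵥ w))
      rw [kal_dot_mulVec_symm hB w (B *ᵥ w)]
    have : (inner ℝ (T w) (T w) : ℝ) = 0 := by rw [hsa, hTx, inner_zero_right]
    have hTw0 : T w = 0 := by
      exact inner_self_eq_zero.mp this
    exact Subtype.ext hTw0
  have hsurj : Function.Surjective T' := (LinearMap.injective_iff_surjective).mp hinj
  let e : K ≃ₗ[ℝ] K := LinearEquiv.ofBijective T' ⟨hinj, hsurj⟩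
  let g : K →L[ℝ] K := (e.symm : K →ₗ[ℝ] K).toContinuousLinearMap
  refine ⟨(‖g‖ + 1)⁻¹, by positivity, ?_⟩
  intro v
  set x : K := ⟨show E from B *ᵥ v, ⟨v, rfl⟩⟩ with hx
  have h1 : ‖x‖ ≤ (‖g‖ + 1) * ‖T' x‖ := by
    have : x = g (T' x) := by
      show x = e.symm (e x)
      rw [LinearEquiv.symm_apply_apply]
    calc ‖x‖ = ‖g (T' x)‖ := by rw [← this]
      _ ≤ ‖g‖ * ‖T' x‖ := g.le_opNorm _
      _ ≤ (‖g‖ + 1) * ‖T' x‖ := by nlinarith [norm_nonneg (T' x), norm_nonneg g]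
  have hxnorm : ‖x‖ = ‖(show E from B *ᵥ v)‖ := rfl
  have hTxnorm : ‖T' x‖ = ‖(show E from B *ᵥ (B *ᵥ v))‖ := rfl
  rw [hxnorm, hTxnorm] at h1
  rw [inv_mul_le_iff₀ (by positivity)]
  linarith [h1]

lemma kal_psd_cs {Y : Matrix (Fin d) (Fin d) ℝ} (hY : Y.PosSemidef) (u w : Fin d → ℝ) :
    (u ⬝ᵥ (Y *ᵥ w))^2 ≤ (u ⬝ᵥ (Y *ᵥ u)) * (w ⬝ᵥ (Y *ᵥ w)) := by
  have hYs := kal_psd_symm hY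
  have hquad : ∀ t : ℝ, 0 ≤ (u ⬝ᵥ (Y *ᵥ u)) * (t * t) + (2 * (u ⬝ᵥ (Y *ᵥ w))) * t
      + (w ⬝ᵥ (Y *ᵥ w)) := by
    intro t
    have h := kal_psd_nonneg hY (w + t • u)
    rw [Matrix.mulVec_add, Matrix.mulVec_smul, dotProduct_add, add_dotProduct,
      add_dotProduct, dotProduct_smul, smul_dotProduct,
      smul_dotProduct, dotProduct_smul] at h
    have hcross : u ⬝ᵥ (Y *ᵥ w) = w ⬝ᵥ (Y *ᵥ u) := by
      rw [kal_dot_mulVec_symm hYs u w, dotProduct_comm]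
    simp only [smul_eq_mul] at h
    rw [← hcross] at h
    nlinarith [h]
  have hd := discrim_le_zero hquad
  rw [discrim] at hd
  nlinarith [hd]

lemma kal_inv_quad_le {X Y : Matrix (Fin d) (Fin d) ℝ} (hX : X.PosDef) (hY : Y.PosDef)
    (h : ∀ v, v ⬝ᵥ (Y *ᵥ v) ≤ v ⬝ᵥ (X *ᵥ v)) :
    ∀ v, v ⬝ᵥ (X⁻¹ *ᵥ v) ≤ v ⬝ᵥ (Y⁻¹ *ᵥ v) := by
  intro v
  have hXinv : (X⁻¹).PosDef := hX.inv
  have hYinv : (Y⁻¹).PosDef := hY.inv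
  rcases eq_or_ne v 0 with rfl | hv
  · simp [Matrix.mulVec_zero]
  · set u : Fin d → ℝ := X⁻¹ *ᵥ v with hu
    set w : Fin d → ℝ := Y⁻¹ *ᵥ v with hw
    have hXu : X *ᵥ u = v := by
      rw [hu, Matrix.mulVec_mulVec,
        Matrix.mul_nonsing_inv X (isUnit_iff_ne_zero.mpr hX.det_pos.ne'), Matrix.one_mulVec]
    have hYw : Y *ᵥ w = v := by
      rw [hw, Matrix.mulVec_mulVec,
        Matrix.mul_nonsing_inv Y (isUnit_iff_ne_zero.mpr hY.det_pos.ne'), Matrix.one_mulVec]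
    set a : ℝ := v ⬝ᵥ (X⁻¹ *ᵥ v) with ha
    have hau : a = u ⬝ᵥ (X *ᵥ u) := by
      rw [ha, ← hu, hXu]
      exact dotProduct_comm v u
    have hapos : 0 < a := kal_pd_pos hXinv hv
    have hcs : (u ⬝ᵥ (Y *ᵥ w))^2 ≤ (u ⬝ᵥ (Y *ᵥ u)) * (w ⬝ᵥ (Y *ᵥ w)) :=
      kal_psd_cs hY.posSemidef u w
    have h1 : u ⬝ᵥ (Y *ᵥ w) = a := by
      rw [hYw, ha, ← hu]
      exact dotProduct_comm u v
    have h2 : w ⬝ᵥ (Y *ᵥ w) = v ⬝ᵥ (Y⁻¹ *ᵥ v) := by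
      rw [hYw, ← hw, dotProduct_comm]
    have h3 : u ⬝ᵥ (Y *ᵥ u) ≤ a := by rw [hau]; exact h u
    rw [h1, h2] at hcs
    have h4 : 0 ≤ v ⬝ᵥ (Y⁻¹ *ᵥ v) := kal_psd_nonneg hYinv.posSemidef v
    nlinarith [hcs, h3, h4, hapos]

lemma kal_pow_bound {x : ℝ} (h0 : 0 ≤ x) (h1 : x < 1) (n : ℕ) :
    (n:ℝ) * x^n ≤ x / (1-x) := by
  have h1x : 0 < 1 - x := by linarith
  cases n with
  | zero => simp; positivity
  | succ k =>
    have hle : ((k:ℝ)+1) * x^k ≤ 1/(1-x) := by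
      have hterm : ∀ j ∈ Finset.range (k+1), x^k ≤ x^j := by
        intro j hj
        exact pow_le_pow_of_le_one h0 h1.le (Nat.lt_succ_iff.mp (Finset.mem_range.mp hj))
      have hsum : ((k:ℝ)+1) * x^k ≤ ∑ j ∈ Finset.range (k+1), x^j := by
        calc ((k:ℝ)+1) * x^k = (Finset.range (k+1)).card • x^k := by
              simp [nsmul_eq_mul]
          _ ≤ ∑ j ∈ Finset.range (k+1), x^j := Finset.card_nsmul_le_sum _ _ _ hterm
      have hxk : (0:ℝ) ≤ x^(k+1) := pow_nonneg h0 _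
      have : ∑ j ∈ Finset.range (k+1), x^j ≤ 1/(1-x) := by
        rw [le_div_iff₀ h1x]
        have gm := geom_sum_mul x (k+1)
        nlinarith [gm, hxk]
      linarith
    have : ((k:ℝ)+1) * x^(k+1) ≤ (1/(1-x)) * x := by
      rw [pow_succ]
      calc ((k:ℝ)+1) * (x^k * x) = (((k:ℝ)+1) * x^k) * x := by ring
        _ ≤ (1/(1-x)) * x := mul_le_mul_of_nonneg_right hle h0
    push_cast
    calc ((k:ℝ)+1) * x^(k+1) ≤ (1/(1-x)) * x := this
      _ = x/(1-x) := by ring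

end KalHelpers

private abbrev KalE (d : ℕ) : Type := EuclideanSpace ℝ (Fin d)

set_option maxHeartbeats 1000000 in
/-- Let `α = 1`, `Sν, Sω` symmetric positive definite, `C 0`
symmetric positive definite, with the recursion
`C (n+1)⁻¹ = Gᵀ Sν⁻¹ G + (C n + Sω)⁻¹`,
`C (n+1)⁻¹ m (n+1) = Gᵀ Sν⁻¹ y + (C n + Sω)⁻¹ m n`. Then the mean sequence `m n`
converges exponentially fast to a point `minf` satisfying
`Gᵀ Sν⁻¹ (y − G minf) = 0`, i.e. `minf` is a stationary point of
`θ ↦ ½‖Sν^{-1/2}(y − Gθ)‖²`. -/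
theorem kalman_mean_convergence_alpha_one
    {Nθ Ny : ℕ} (hNθ : 0 < Nθ) (hNy : 0 < Ny)
    (G : Matrix (Fin Ny) (Fin Nθ) ℝ)
    (y : EuclideanSpace ℝ (Fin Ny))
    (Sν : Matrix (Fin Ny) (Fin Ny) ℝ) (hSν : Sν.PosDef)
    (Sω : Matrix (Fin Nθ) (Fin Nθ) ℝ) (hSω : Sω.PosDef)
    (C : ℕ → Matrix (Fin Nθ) (Fin Nθ) ℝ) (hC0 : (C 0).PosDef)
    (hCrec : ∀ n, C (n + 1) = (Gᵀ * Sν⁻¹ * G + (C n + Sω)⁻¹)⁻¹)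
    (m : ℕ → EuclideanSpace ℝ (Fin Nθ))
    (hmrec : ∀ n, (C (n + 1))⁻¹ *ᵥ m (n + 1) =
      (Gᵀ * Sν⁻¹) *ᵥ y + (C n + Sω)⁻¹ *ᵥ m n) :
    ∃ minf : EuclideanSpace ℝ (Fin Nθ),
      (Gᵀ * Sν⁻¹) *ᵥ (y - show EuclideanSpace ℝ (Fin Ny) from WithLp.toLp 2 (G *ᵥ minf)) = 0 ∧
      ∃ K > (0 : ℝ), ∃ r ∈ Set.Ioo (0 : ℝ) 1, ∀ n : ℕ, ‖m n - minf‖ ≤ K * r ^ n := by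
  classical
  set A := Gᵀ * Sν⁻¹ * G with hAdef
  set b : Fin Nθ → ℝ := (Gᵀ * Sν⁻¹) *ᵥ y with hbdef
  -- A is positive semidefinite
  have hSνinv : (Sν⁻¹).PosDef := hSν.inv
  set Hm := hSνinv.posSemidef.kalSqrt with hHm
  have hH2 : Hm * Hm = Sν⁻¹ := hSνinv.posSemidef.kalSqrt_mul_self
  have hHs : Hmᵀ = Hm := kal_psd_symm hSνinv.posSemidef.posSemidef_kalSqrt
  have hAeqT : A = (Hm * G)ᵀ * (Hm * G) := by
    rw [Matrix.transpose_mul, hHs, hAdef, ← hH2, ← Matrix.mul_assoc, ← Matrix.mul_assoc]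
  have hAeq : A = (Hm * G)ᴴ * (Hm * G) := by
    rw [Matrix.conjTranspose_eq_transpose_of_trivial]; exact hAeqT
  have hA : A.PosSemidef := by
    rw [hAeq]; exact Matrix.posSemidef_conjTranspose_mul_self _
  -- B is the psd square root of A
  set B := hA.kalSqrt with hBdef
  have hBB : B * B = A := hA.kalSqrt_mul_self
  have hBpsd : B.PosSemidef := hA.posSemidef_kalSqrt
  have hBs : Bᵀ = B := kal_psd_symm hBpsd
  -- positive definiteness of everything in sight
  have hCpd : ∀ n, (C n).PosDef := by
    intro n
    induction n with
    | zero => exact hC0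
    | succ k ih =>
      rw [hCrec k]
      exact (Matrix.PosDef.posSemidef_add hA ((ih.add hSω).inv)).inv
  have hDpd : ∀ n, (C n + Sω).PosDef := fun n => (hCpd n).add hSω
  have hDdet : ∀ n, IsUnit (C n + Sω).det :=
    fun n => isUnit_iff_ne_zero.mpr (hDpd n).det_pos.ne'
  have hXpd : ∀ n, (A + (C n + Sω)⁻¹).PosDef := fun n => Matrix.PosDef.posSemidef_add hA (hDpd n).inv
  have hCinv : ∀ n, (C (n+1))⁻¹ = A + (C n + Sω)⁻¹ := by
    intro n
    rw [hCrec n]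
    exact Matrix.nonsing_inv_nonsing_inv _ (isUnit_iff_ne_zero.mpr (hXpd n).det_pos.ne')
  have hmrec' : ∀ n, (A + (C n + Sω)⁻¹) *ᵥ (show (Fin Nθ → ℝ) from m (n+1)) =
      b + (C n + Sω)⁻¹ *ᵥ (show (Fin Nθ → ℝ) from m n) := by
    intro n
    rw [← hCinv n]
    exact hmrec n
  -- existence of a stationary point minf₀
  obtain ⟨minf₀, hminf₀⟩ : ∃ w : Fin Nθ → ℝ, A *ᵥ w = b := by
    set Mm := Hm * G with hMm
    have hle : LinearMap.range (Mmᵀ * Mm).mulVecLin ≤ LinearMap.range Mmᵀ.mulVecLin := by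
      rw [Matrix.mulVecLin_mul]
      exact LinearMap.range_comp_le_range _ _
    have hrank : (Mmᵀ * Mm).rank = Mmᵀ.rank := by
      rw [Matrix.rank_transpose_mul_self, Matrix.rank_transpose]
    have hfr : Module.finrank ℝ (LinearMap.range Mmᵀ.mulVecLin)
        ≤ Module.finrank ℝ (LinearMap.range (Mmᵀ * Mm).mulVecLin) := by
      have h1 : (Mmᵀ * Mm).rank = Module.finrank ℝ (LinearMap.range (Mmᵀ * Mm).mulVecLin) := rfl
      have h2 : Mmᵀ.rank = Module.finrank ℝ (LinearMap.range Mmᵀ.mulVecLin) := rfl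
      rw [← h1, ← h2, hrank]
    have heq := Submodule.eq_of_le_of_finrank_le hle hfr
    have hbmem : b ∈ LinearMap.range Mmᵀ.mulVecLin :=
      ⟨Hm *ᵥ (show (Fin Ny → ℝ) from y), by
        rw [Matrix.mulVecLin_apply, Matrix.mulVec_mulVec, hbdef]
        congr 1
        rw [hMm, Matrix.transpose_mul, hHs, Matrix.mul_assoc, hH2]⟩
    rw [← heq] at hbmem
    obtain ⟨w, hw⟩ := hbmem
    refine ⟨w, ?_⟩
    rw [Matrix.mulVecLin_apply] at hw
    rw [hAeqT]
    exact hw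
  -- the error sequence and its filtered version
  set e : ℕ → (Fin Nθ → ℝ) := fun n => (show (Fin Nθ → ℝ) from m n) - minf₀ with hedef
  have hkey : ∀ n, e n = (C n + Sω) *ᵥ (A *ᵥ e (n+1)) + e (n+1) := by
    intro n
    have h1 : (A + (C n + Sω)⁻¹) *ᵥ e (n+1) = (C n + Sω)⁻¹ *ᵥ e n := by
      show (A + (C n + Sω)⁻¹) *ᵥ ((show (Fin Nθ → ℝ) from m (n+1)) - minf₀)
          = (C n + Sω)⁻¹ *ᵥ ((show (Fin Nθ → ℝ) from m n) - minf₀)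
      rw [Matrix.mulVec_sub, Matrix.mulVec_sub, hmrec' n, Matrix.add_mulVec A _ minf₀, hminf₀]
      abel
    have h2 := congrArg (fun w => (C n + Sω) *ᵥ w) h1
    rw [Matrix.mulVec_mulVec, Matrix.mulVec_mulVec, Matrix.mul_nonsing_inv _ (hDdet n),
      Matrix.one_mulVec, Matrix.mul_add, Matrix.mul_nonsing_inv _ (hDdet n),
      Matrix.add_mulVec, Matrix.one_mulVec, ← Matrix.mulVec_mulVec] at h2
    exact h2.symm
  set g : ℕ → (Fin Nθ → ℝ) := fun n => B *ᵥ e n with hgdef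
  have hAe : ∀ n, A *ᵥ e n = B *ᵥ g n := by
    intro n
    rw [hgdef]
    show A *ᵥ e n = B *ᵥ (B *ᵥ e n)
    rw [Matrix.mulVec_mulVec, hBB]
  have hgrec : ∀ n, g n = B *ᵥ ((C n + Sω) *ᵥ (B *ᵥ g (n+1))) + g (n+1) := by
    intro n
    show B *ᵥ e n = _
    conv_lhs => rw [hkey n]
    rw [Matrix.mulVec_add]
    congr 1
    rw [← hAe (n+1)]
  -- contraction constants
  obtain ⟨s, hs, hsq⟩ := kal_posdef_lb hNθ hSω
  obtain ⟨c, hc, hcq⟩ := kal_range_lb hBs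
  set δ : ℝ := s * c^2 with hδdef
  have hδ : 0 < δ := by positivity
  set r : ℝ := 1/(1+δ) with hrdef
  have hr0 : 0 < r := by rw [hrdef]; positivity
  have hr1 : r < 1 := by
    rw [hrdef, div_lt_one (by linarith)]
    linarith
  -- quadratic form of D n dominates that of Sω
  have hDq : ∀ n (v : Fin Nθ → ℝ), s * ‖(show KalE Nθ from v)‖^2 ≤ v ⬝ᵥ ((C n + Sω) *ᵥ v) := by
    intro n v
    have h1 := hsq (show KalE Nθ from v)
    have h2 : v ⬝ᵥ ((C n + Sω) *ᵥ v) = v ⬝ᵥ (C n *ᵥ v) + v ⬝ᵥ (Sω *ᵥ v) := by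
      rw [Matrix.add_mulVec, dotProduct_add]
    have h3 := kal_psd_nonneg (hCpd n).posSemidef v
    rw [h2]
    linarith [h1, h3]
  have hcontr : ∀ n, ‖(show KalE Nθ from g (n+1))‖ ≤ r * ‖(show KalE Nθ from g n)‖ := by
    intro n
    have hquad : (1+δ) * ‖(show KalE Nθ from g (n+1))‖^2 ≤ (g (n+1)) ⬝ᵥ (g n) := by
      have hexp : (g (n+1)) ⬝ᵥ (g n)
          = (B *ᵥ g (n+1)) ⬝ᵥ ((C n + Sω) *ᵥ (B *ᵥ g (n+1))) + (g (n+1)) ⬝ᵥ (g (n+1)) := by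
        conv_lhs => rw [hgrec n]
        rw [dotProduct_add, kal_dot_mulVec_symm hBs]
      have hterm1 : s * (c * ‖(show KalE Nθ from g (n+1))‖)^2
          ≤ (B *ᵥ g (n+1)) ⬝ᵥ ((C n + Sω) *ᵥ (B *ᵥ g (n+1))) := by
        have hlow := hDq n (B *ᵥ g (n+1))
        have hcg := hcq (e (n+1))
        have hBg : (show KalE Nθ from B *ᵥ e (n+1)) = (show KalE Nθ from g (n+1)) := rfl
        rw [hBg] at hcg
        have hxy : c * ‖(show KalE Nθ from g (n+1))‖ ≤ ‖(show KalE Nθ from B *ᵥ g (n+1))‖ := hcg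
        have hsq2 : (c * ‖(show KalE Nθ from g (n+1))‖)^2 ≤ ‖(show KalE Nθ from B *ᵥ g (n+1))‖^2 := by
          have h0 : 0 ≤ c * ‖(show KalE Nθ from g (n+1))‖ :=
            mul_nonneg hc.le (norm_nonneg _)
          nlinarith [hxy, h0]
        calc s * (c * ‖(show KalE Nθ from g (n+1))‖)^2
            ≤ s * ‖(show KalE Nθ from B *ᵥ g (n+1))‖^2 :=
              mul_le_mul_of_nonneg_left hsq2 hs.le
          _ ≤ (B *ᵥ g (n+1)) ⬝ᵥ ((C n + Sω) *ᵥ (B *ᵥ g (n+1))) := hlow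
      have hterm2 : (g (n+1)) ⬝ᵥ (g (n+1)) = ‖(show KalE Nθ from g (n+1))‖^2 :=
        (kal_norm_sq (show KalE Nθ from g (n+1))).symm
      rw [hexp, hterm2]
      have : (1+δ) * ‖(show KalE Nθ from g (n+1))‖^2
          = δ * ‖(show KalE Nθ from g (n+1))‖^2 + ‖(show KalE Nθ from g (n+1))‖^2 := by ring
      rw [this, hδdef]
      have : s * c^2 * ‖(show KalE Nθ from g (n+1))‖^2 = s * (c * ‖(show KalE Nθ from g (n+1))‖)^2 := by ring
      rw [this]
      linarith [hterm1]
    have hCS : (g (n+1)) ⬝ᵥ (g n) ≤ ‖(show KalE Nθ from g (n+1))‖ * ‖(show KalE Nθ from g n)‖ := by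
      rw [← kal_inner_eq_dot]
      exact real_inner_le_norm _ _
    rcases eq_or_lt_of_le (norm_nonneg (show KalE Nθ from g (n+1))) with h0 | h0
    · rw [← h0]; positivity
    · have h1 : (1+δ) * ‖(show KalE Nθ from g (n+1))‖ ≤ ‖(show KalE Nθ from g n)‖ := by
        have := hquad.trans hCS
        nlinarith [h0]
      rw [hrdef]
      rw [div_mul_eq_mul_div, le_div_iff₀ (by linarith : (0:ℝ) < 1+δ)]
      nlinarith [h1]
  have hgbound : ∀ n, ‖(show KalE Nθ from g n)‖ ≤ r^n * ‖(show KalE Nθ from g 0)‖ := by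
    intro n
    induction n with
    | zero => simp
    | succ k ih =>
      calc ‖(show KalE Nθ from g (k+1))‖ ≤ r * ‖(show KalE Nθ from g k)‖ := hcontr k
        _ ≤ r * (r^k * ‖(show KalE Nθ from g 0)‖) := by
            apply mul_le_mul_of_nonneg_left ih hr0.le
        _ = r^(k+1) * ‖(show KalE Nθ from g 0)‖ := by ring
  -- trace bounds
  have htrstep : ∀ n, (C (n+1)).trace ≤ (C n).trace + Sω.trace := by
    intro n
    have hq : ∀ v, v ⬝ᵥ (C (n+1) *ᵥ v) ≤ v ⬝ᵥ ((C n + Sω) *ᵥ v) := by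
      intro v
      have hmono : ∀ w : Fin Nθ → ℝ, w ⬝ᵥ ((C n + Sω)⁻¹ *ᵥ w)
          ≤ w ⬝ᵥ ((A + (C n + Sω)⁻¹) *ᵥ w) := by
        intro w
        rw [Matrix.add_mulVec, dotProduct_add]
        have := kal_psd_nonneg hA w
        linarith
      have := kal_inv_quad_le (hXpd n) (hDpd n).inv hmono v
      rw [Matrix.nonsing_inv_nonsing_inv _ (hDdet n)] at this
      rw [hCrec n]
      exact this
    have := kal_trace_mono hq
    rwa [Matrix.trace_add] at this
  have htr : ∀ n, (C n).trace ≤ (C 0).trace + n * Sω.trace := by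
    intro n
    induction n with
    | zero => simp
    | succ k ih =>
      have := htrstep k
      push_cast
      push_cast at ih
      linarith
  have htrC0 : 0 ≤ (C 0).trace := kal_trace_nonneg hC0.posSemidef
  have htrSω : 0 ≤ Sω.trace := kal_trace_nonneg hSω.posSemidef
  set tc : ℝ := (C 0).trace + Sω.trace with htcdef
  have htc : 0 ≤ tc := by rw [htcdef]; linarith
  have hDentry : ∀ n i j, |(C n + Sω) i j| ≤ tc * (n+1) := by
    intro n i j
    calc |(C n + Sω) i j| ≤ (C n + Sω).trace := kal_psd_entry_le (hDpd n).posSemidef i j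
      _ = (C n).trace + Sω.trace := Matrix.trace_add _ _
      _ ≤ ((C 0).trace + n * Sω.trace) + Sω.trace := by linarith [htr n]
      _ ≤ tc * (n+1) := by
          rw [htcdef]
          have : (0:ℝ) ≤ n := Nat.cast_nonneg n
          nlinarith [htrC0, htrSω]
  have hDnorm : ∀ n (w : Fin Nθ → ℝ), ‖(show KalE Nθ from (C n + Sω) *ᵥ w)‖
      ≤ (Nθ * (tc * (n+1))) * ‖(show KalE Nθ from w)‖ := by
    intro n w
    exact kal_mulVec_norm_le _ (by positivity) (hDentry n) (show KalE Nθ from w)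
  have hBnorm : ∀ w : Fin Nθ → ℝ, ‖(show KalE Nθ from B *ᵥ w)‖ ≤ (Nθ * B.trace) * ‖(show KalE Nθ from w)‖ := by
    intro w
    exact kal_mulVec_norm_le _ (kal_trace_nonneg hBpsd) (kal_psd_entry_le hBpsd) (show KalE Nθ from w)
  have htrB : 0 ≤ B.trace := kal_trace_nonneg hBpsd
  -- geometric rate ρ = √r
  set ρ : ℝ := Real.sqrt r with hρdef
  have hρ0 : 0 < ρ := Real.sqrt_pos.mpr hr0
  have hρ1 : ρ < 1 := by
    rw [hρdef]
    rw [show (1:ℝ) = Real.sqrt 1 by simp]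
    exact Real.sqrt_lt_sqrt hr0.le hr1
  have hρsq : ρ * ρ = r := Real.mul_self_sqrt hr0.le
  -- the sequence f n = e n in E
  set f : ℕ → KalE Nθ := fun n => show KalE Nθ from e n with hfdef
  set κ : ℝ := (Nθ * tc) * (Nθ * B.trace) * ‖(show KalE Nθ from g 0)‖ with hκdef
  have hκ0 : 0 ≤ κ := by
    rw [hκdef]
    positivity
  set Cg : ℝ := κ * (1/(1-ρ)) with hCgdef
  have hCg0 : 0 ≤ Cg := by
    rw [hCgdef]
    have : 0 < 1 - ρ := by linarith
    positivity
  have hstep : ∀ n, dist (f n) (f (n+1)) ≤ Cg * ρ^n := by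
    intro n
    have hsub : f n - f (n+1) = (show KalE Nθ from (C n + Sω) *ᵥ (B *ᵥ g (n+1))) := by
      apply WithLp.ofLp_injective 2
      show e n - e (n+1) = (C n + Sω) *ᵥ (B *ᵥ g (n+1))
      rw [← hAe (n+1)]
      rw [sub_eq_iff_eq_add]
      exact hkey n
    rw [dist_eq_norm, hsub]
    have h1 : ‖(show KalE Nθ from (C n + Sω) *ᵥ (B *ᵥ g (n+1)))‖
        ≤ (Nθ * (tc * (n+1))) * ((Nθ * B.trace) * ‖(show KalE Nθ from g (n+1))‖) := by
      calc ‖(show KalE Nθ from (C n + Sω) *ᵥ (B *ᵥ g (n+1)))‖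
          ≤ (Nθ * (tc * (n+1))) * ‖(show KalE Nθ from B *ᵥ g (n+1))‖ := hDnorm n _
        _ ≤ (Nθ * (tc * (n+1))) * ((Nθ * B.trace) * ‖(show KalE Nθ from g (n+1))‖) := by
            apply mul_le_mul_of_nonneg_left (hBnorm _) (by positivity)
    have h2 : ‖(show KalE Nθ from g (n+1))‖ ≤ r^(n+1) * ‖(show KalE Nθ from g 0)‖ := hgbound (n+1)
    have h3 : ((n:ℝ)+1) * r^(n+1) ≤ (1/(1-ρ)) * ρ^n := by
      have hrr : r^(n+1) = ρ^(n+1) * ρ^(n+1) := by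
        rw [← hρsq, mul_pow]
      have hb1 : ((n:ℝ)+1) * ρ^(n+1) ≤ ρ/(1-ρ) := by
        have := kal_pow_bound hρ0.le hρ1 (n+1)
        push_cast at this
        exact this
      have hb2 : ρ^(n+1) ≤ ρ^n := by
        calc ρ^(n+1) = ρ^n * ρ := pow_succ ρ n
          _ ≤ ρ^n * 1 := by
              apply mul_le_mul_of_nonneg_left hρ1.le (pow_nonneg hρ0.le n)
          _ = ρ^n := mul_one _
      have h1ρ : 0 < 1 - ρ := by linarith
      calc ((n:ℝ)+1) * r^(n+1) = (((n:ℝ)+1) * ρ^(n+1)) * ρ^(n+1) := by rw [hrr]; ring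
        _ ≤ (ρ/(1-ρ)) * ρ^(n+1) :=
            mul_le_mul_of_nonneg_right hb1 (pow_nonneg hρ0.le _)
        _ ≤ (ρ/(1-ρ)) * ρ^n :=
            mul_le_mul_of_nonneg_left hb2 (by positivity)
        _ ≤ (1/(1-ρ)) * ρ^n := by
            apply mul_le_mul_of_nonneg_right _ (pow_nonneg hρ0.le n)
            gcongr
    have hg1 : 0 ≤ ‖(show KalE Nθ from g 0)‖ := norm_nonneg _
    have hNtc : (0:ℝ) ≤ (Nθ : ℝ) * (tc * (n+1)) :=
      mul_nonneg (Nat.cast_nonneg _) (mul_nonneg htc (by positivity))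
    calc ‖(show KalE Nθ from (C n + Sω) *ᵥ (B *ᵥ g (n+1)))‖
        ≤ (Nθ * (tc * (n+1))) * ((Nθ * B.trace) * ‖(show KalE Nθ from g (n+1))‖) := h1
      _ ≤ (Nθ * (tc * (n+1))) * ((Nθ * B.trace) * (r^(n+1) * ‖(show KalE Nθ from g 0)‖)) := by
          apply mul_le_mul_of_nonneg_left _ hNtc
          exact mul_le_mul_of_nonneg_left h2 (mul_nonneg (Nat.cast_nonneg _) htrB)
      _ = κ * (((n:ℝ)+1) * r^(n+1)) := by rw [hκdef]; ring
      _ ≤ κ * ((1/(1-ρ)) * ρ^n) := mul_le_mul_of_nonneg_left h3 hκ0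
      _ = Cg * ρ^n := by rw [hCgdef]; ring
  -- convergence of f
  have hcauchy : CauchySeq f := cauchySeq_of_le_geometric ρ Cg hρ1 hstep
  obtain ⟨L, hL⟩ := cauchySeq_tendsto_of_complete hcauchy
  have hdistL : ∀ n, dist (f n) L ≤ Cg * ρ^n / (1-ρ) :=
    fun n => dist_le_of_le_geometric_of_tendsto ρ Cg hρ1 hstep hL n
  -- A *ᵥ L = 0
  have hALpi : A *ᵥ (show (Fin Nθ → ℝ) from L) = 0 := by
    set TAc : KalE Nθ →L[ℝ] KalE Nθ :=
      LinearMap.toContinuousLinearMap (show KalE Nθ →ₗ[ℝ] KalE Nθ from Matrix.toEuclideanLin A) with hTAc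
    have h1 : Filter.Tendsto (fun n => TAc (f n)) Filter.atTop (𝓝 (TAc L)) :=
      (TAc.continuous.tendsto L).comp hL
    have h2 : ∀ n, TAc (f n) = (show KalE Nθ from B *ᵥ g n) := by
      intro n
      show (show KalE Nθ from A *ᵥ e n) = (show KalE Nθ from B *ᵥ g n)
      exact congrArg (WithLp.toLp 2) (hAe n)
    have hb : ∀ n, ‖TAc (f n)‖ ≤ ((Nθ * B.trace) * ‖(show KalE Nθ from g 0)‖) * r^n := by
      intro n
      rw [h2 n]
      calc ‖(show KalE Nθ from B *ᵥ g n)‖ ≤ (Nθ * B.trace) * ‖(show KalE Nθ from g n)‖ := hBnorm _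
        _ ≤ (Nθ * B.trace) * (r^n * ‖(show KalE Nθ from g 0)‖) := by
            apply mul_le_mul_of_nonneg_left (hgbound n) (mul_nonneg (Nat.cast_nonneg _) htrB)
        _ = ((Nθ * B.trace) * ‖(show KalE Nθ from g 0)‖) * r^n := by ring
    have hρ2 : Filter.Tendsto (fun n => ((Nθ * B.trace) * ‖(show KalE Nθ from g 0)‖) * r^n)
        Filter.atTop (𝓝 0) := by
      have hbase : Filter.Tendsto (fun n : ℕ => r^n) Filter.atTop (𝓝 0) :=
        tendsto_pow_atTop_nhds_zero_of_lt_one hr0.le hr1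
      have := hbase.const_mul ((Nθ * B.trace) * ‖(show KalE Nθ from g 0)‖)
      rwa [mul_zero] at this
    have h3 : Filter.Tendsto (fun n => TAc (f n)) Filter.atTop (𝓝 0) :=
      squeeze_zero_norm hb hρ2
    have hfin : TAc L = 0 := tendsto_nhds_unique h1 h3
    exact congrArg WithLp.ofLp hfin
  -- conclusion
  refine ⟨(show KalE Nθ from minf₀) + L, ?_, ?_⟩
  · -- stationarity
    show (Gᵀ * Sν⁻¹) *ᵥ ((show (Fin Ny → ℝ) from y) - G *ᵥ (minf₀ + (show (Fin Nθ → ℝ) from L))) = 0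
    rw [Matrix.mulVec_sub, Matrix.mulVec_mulVec, ← hAdef, Matrix.mulVec_add, hminf₀,
      hALpi, ← hbdef]
    simp
  · -- exponential convergence
    have h1ρ : 0 < 1 - ρ := by linarith
    refine ⟨Cg/(1-ρ) + 1, by positivity, ρ, ⟨hρ0, hρ1⟩, ?_⟩
    intro n
    have hmn : m n - ((show KalE Nθ from minf₀) + L) = f n - L := by
      apply WithLp.ofLp_injective 2
      show (show (Fin Nθ → ℝ) from m n) - (minf₀ + (show (Fin Nθ → ℝ) from L))
          = ((show (Fin Nθ → ℝ) from m n) - minf₀) - (show (Fin Nθ → ℝ) from L)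
      rw [sub_add_eq_sub_sub]
    rw [hmn, ← dist_eq_norm]
    calc dist (f n) L ≤ Cg * ρ^n / (1-ρ) := hdistL n
      _ = (Cg/(1-ρ)) * ρ^n := by ring
      _ ≤ (Cg/(1-ρ) + 1) * ρ^n := by
          apply mul_le_mul_of_nonneg_right _ (pow_nonneg hρ0.le n)
          linarith
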